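/- Two ordinary vertices u and w of a first-level auxiliary graph G_r are 2-edge-connected in G_r if and only if they are 2-edge-connected in G; consequently every 2-edge-connected block of G is contained in the vertex set of a single tree of the canonical decomposition of the dominator tree D(s). -/

import Mathlib

variable {V : Type*}

/-- A walk in a digraph given by its edge set `E`, recorded as a list of edges. -/
inductive IsWalk (E : Set (V × V)) : V → V → List (V × V) → Prop
  | nil (u : V) : IsWalk E u u []
  | cons {u v w : V} {p : List (V × V)} (h : (u, v) ∈ E) (hp : IsWalk E v w p) :
      IsWalk E u w ((u, v) :: p)

def Reaches (E : Set (V × V)) (u v : V) : Prop := ∃ p, IsWalk E u v p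

def StronglyConnected (E : Set (V × V)) : Prop := ∀ u v : V, Reaches E u v

/-- Two edge-disjoint directed paths from `u` to `v`. -/
def TwoEDP (E : Set (V × V)) (u v : V) : Prop :=
  ∃ p q, IsWalk E u v p ∧ IsWalk E u v q ∧ p.Disjoint q

/-- `u` and `v` are 2-edge-connected. -/
def TwoEC (E : Set (V × V)) (u v : V) : Prop := TwoEDP E u v ∧ TwoEDP E v u

/-- A 2-edge-connected block: a maximal set of pairwise 2-edge-connected vertices. -/
def Is2ECBlock (E : Set (V × V)) (B : Set V) : Prop :=
  (∀ u ∈ B, ∀ v ∈ B, TwoEC E u v) ∧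
    ∀ C : Set V, B ⊆ C → (∀ u ∈ C, ∀ v ∈ C, TwoEC E u v) → C = B

def SameBlocks (E E' : Set (V × V)) : Prop :=
  ∀ B : Set V, Is2ECBlock E B ↔ Is2ECBlock E' B

/-- A strong bridge: an edge whose removal increases the number of strongly
connected components, i.e. destroys the mutual reachability of some pair. -/
def IsStrongBridge (E : Set (V × V)) (e : V × V) : Prop :=
  e ∈ E ∧ ∃ u v : V, (Reaches E u v ∧ Reaches E v u) ∧
    ¬ (Reaches (E \ {e}) u v ∧ Reaches (E \ {e}) v u)

/-- A 2-edge-connected digraph: strongly connected and stays so after deleting any edge. -/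
def Is2ECGraph (E : Set (V × V)) : Prop :=
  StronglyConnected E ∧ ∀ e ∈ E, StronglyConnected (E \ {e})

/-- Edges of `E` induced on the vertex set `C`. -/
def restrictE (E : Set (V × V)) (C : Set V) : Set (V × V) :=
  {e ∈ E | e.1 ∈ C ∧ e.2 ∈ C}

def SCOn (E' : Set (V × V)) (C : Set V) : Prop :=
  ∀ u ∈ C, ∀ v ∈ C, Reaches E' u v

/-- `E'` is a 2-edge-connected (spanning sub)graph on the vertex set `C`. -/
def Is2ECOn (E' : Set (V × V)) (C : Set V) : Prop :=
  SCOn E' C ∧ ∀ e ∈ E', SCOn (E' \ {e}) C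

/-- A 2-edge-connected component: a maximal vertex set inducing a 2-edge-connected subgraph. -/
def Is2ECComponent (E : Set (V × V)) (C : Set V) : Prop :=
  Is2ECOn (restrictE E C) C ∧
    ∀ D : Set V, C ⊆ D → Is2ECOn (restrictE E D) D → D = C

/-- A solution to 2EC-B: a strongly connected spanning subgraph with the same
2-edge-connected blocks. -/
def IsSolutionB (E E' : Set (V × V)) : Prop :=
  E' ⊆ E ∧ StronglyConnected E' ∧ SameBlocks E' E

/-- The reverse digraph. -/
def revE (E : Set (V × V)) : Set (V × V) := {e | (e.2, e.1) ∈ E}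

/-- A bridge of the flow graph with start vertex `s`: an edge contained in every
walk from `s` to its head. -/
def IsBridge (E : Set (V × V)) (s : V) (e : V × V) : Prop :=
  e ∈ E ∧ ∀ p, IsWalk E s e.2 p → e ∈ p

/-- `u` is a vertex of the walk `p` starting at `s`. -/
def OnWalk (s : V) (p : List (V × V)) (u : V) : Prop :=
  u = s ∨ ∃ e ∈ p, e.2 = u

/-- `u` dominates `w` in the flow graph with start `s`. -/
def Dom (E : Set (V × V)) (s u w : V) : Prop :=
  ∀ p, IsWalk E s w p → OnWalk s p u

def PDom (E : Set (V × V)) (s u w : V) : Prop := Dom E s u w ∧ u ≠ w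

/-- `u` is the immediate dominator of `w`. -/
def Idom (E : Set (V × V)) (s u w : V) : Prop :=
  PDom E s u w ∧ ∀ x, PDom E s x w → Dom E s x u

/-- Marked vertices: roots of the trees of the canonical decomposition of the
dominator tree, i.e. `s` and the heads of bridges of `G(s)`. -/
def Marked (E : Set (V × V)) (s r : V) : Prop :=
  r = s ∨ ∃ e, IsBridge E s e ∧ e.2 = r

/-- `w` belongs to the tree `T(r)` of the canonical decomposition:
`r` is the nearest marked dominator of `w`. -/
def InTree (E : Set (V × V)) (s r w : V) : Prop :=
  Marked E s r ∧ Dom E s r w ∧ ∀ x, Marked E s x → Dom E s x w → Dom E s x r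

/-- A spanning tree of the flow graph `G(s)` rooted at `s`. -/
def IsSpanningTree (E : Set (V × V)) (s : V) (T : Set (V × V)) : Prop :=
  T ⊆ E ∧ (∀ v, Reaches T s v) ∧ (∀ v, v ≠ s → ∃! e, e ∈ T ∧ e.2 = v) ∧
    ∀ e ∈ T, e.2 ≠ s

/-- Two independent spanning trees: for every `v`, the two tree paths from `s`
to `v` share only dominators of `v`. -/
def IndependentTrees (E : Set (V × V)) (s : V) (T₁ T₂ : Set (V × V)) : Prop :=
  IsSpanningTree E s T₁ ∧ IsSpanningTree E s T₂ ∧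
    ∀ v p q, IsWalk T₁ s v p → IsWalk T₂ s v q →
      ∀ u, OnWalk s p u → OnWalk s q u → Dom E s u v

/-- The contraction map defining the first-level auxiliary graph `G_r`:
vertices of `T(r)` stay put, descendants of a marked child `x` of a boundary
vertex of `T(r)` are contracted into `x`, and non-descendants of `r` are
contracted into `d(r)`. -/
def ContractsTo (E : Set (V × V)) (s r v x : V) : Prop :=
  (InTree E s r v ∧ x = v) ∨
  (Dom E s r v ∧ ¬ InTree E s r v ∧ Marked E s x ∧ Dom E s x v ∧
    ∃ u, InTree E s r u ∧ Idom E s u x) ∨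
  (¬ Dom E s r v ∧ Idom E s x r)

/-- The edge set of the first-level auxiliary graph `G_r`. -/
def AuxE (E : Set (V × V)) (s r : V) : Set (V × V) :=
  {e | ∃ a b, (a, b) ∈ E ∧ ContractsTo E s r a e.1 ∧ ContractsTo E s r b e.2}

def cutEdges (E : Set (V × V)) (U W : Set V) : Set (V × V) :=
  {e ∈ E | e.1 ∈ U ∧ e.2 ∈ W}

def IsCut (u w : V) (U W : Set V) : Prop := u ∈ U ∧ w ∈ W ∧ Disjoint U W

def IsMinCut (E : Set (V × V)) (u w : V) (U W : Set V) : Prop :=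
  IsCut u w U W ∧ ∀ U' W' : Set V, IsCut u w U' W' →
    (cutEdges E U W).ncard ≤ (cutEdges E U' W').ncard

/-- There exist `k` pairwise edge-disjoint walks from `u` to `w`. -/
def HasEDP (E : Set (V × V)) (u w : V) (k : ℕ) : Prop :=
  ∃ P : Fin k → List (V × V), (∀ i, IsWalk E u w (P i)) ∧
    ∀ i j, i ≠ j → (P i).Disjoint (P j)

/-- The (loop-free, simple) quotient of the inter-component edges `F` under the
component map `h`. -/
def quotE {V' : Type*} (h : V → V') (F : Set (V × V)) : Set (V' × V') :=
  {q | ∃ e ∈ F, h e.1 = q.1 ∧ h e.2 = q.2 ∧ q.1 ≠ q.2}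

/-- A solution to 2EC-C: a strongly connected spanning subgraph with the same
2-edge-connected components. -/
def IsSolutionC (E E' : Set (V × V)) : Prop :=
  E' ⊆ E ∧ StronglyConnected E' ∧
    ∀ C : Set V, Is2ECComponent E C ↔ Is2ECComponent E' C

/-- One step of the deletion process: delete an edge `(x,y)` such that two
edge-disjoint `x → y` paths remain. -/
def DelStep (E₁ E₂ : Set (V × V)) : Prop :=
  ∃ x y : V, (x, y) ∈ E₁ ∧ E₂ = E₁ \ {(x, y)} ∧ TwoEDP E₂ x y


section WalkLib

variable {V : Type*} {E : Set (V × V)}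

theorem isWalk_append {a b c : V} {p q : List (V × V)}
    (h1 : IsWalk E a b p) (h2 : IsWalk E b c q) : IsWalk E a c (p ++ q) := by
  induction h1 with
  | nil => simpa using h2
  | cons h _ ih => exact .cons h (ih h2)

theorem isWalk_edge_mem {a b : V} {p : List (V × V)} (h : IsWalk E a b p)
    {e : V × V} (he : e ∈ p) : e ∈ E := by
  induction h with
  | nil => simp at he
  | cons h hp ih =>
    rcases List.mem_cons.1 he with rfl | he
    · exact h
    · exact ih he

theorem isWalk_split {a b : V} {A B : List (V × V)} {e : V × V}
    (h : IsWalk E a b (A ++ e :: B)) :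
    IsWalk E a e.1 A ∧ e ∈ E ∧ IsWalk E e.2 b B := by
  induction A generalizing a with
  | nil =>
    cases h with
    | cons hE hp => exact ⟨.nil a, hE, hp⟩
  | cons f A ih =>
    cases h with
    | cons hE hp =>
      obtain ⟨h1, h2, h3⟩ := ih hp
      exact ⟨.cons hE h1, h2, h3⟩

theorem isWalk_last_head {a b : V} {p : List (V × V)} (h : IsWalk E a b p)
    (hne : p ≠ []) : ∃ e ∈ p, e.2 = b := by
  induction h with
  | nil => simp at hne
  | cons h hp ih =>
    rename_i u v w p'
    rcases eq_or_ne p' [] with rfl | hp'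
    · cases hp; exact ⟨(u, v), by simp⟩
    · obtain ⟨e, he, h2⟩ := ih hp'
      exact ⟨e, List.mem_cons_of_mem _ he, h2⟩

theorem isWalk_onWalk_end {a b : V} {p : List (V × V)} (h : IsWalk E a b p) :
    OnWalk a p b := by
  rcases eq_or_ne p [] with rfl | hne
  · cases h; exact Or.inl rfl
  · exact Or.inr (isWalk_last_head h hne)

/-- split a list at the first element satisfying `P`. -/
theorem list_first_pred {α : Type*} {p : List α} {P : α → Prop}
    (h : ∃ e ∈ p, P e) : ∃ A e B, p = A ++ e :: B ∧ P e ∧ ∀ f ∈ A, ¬ P f := by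
  classical
  induction p with
  | nil => simp at h
  | cons x p ih =>
    by_cases hx : P x
    · exact ⟨[], x, p, by simp, hx, by simp⟩
    · obtain ⟨e, he, hPe⟩ := h
      rcases List.mem_cons.1 he with rfl | he
      · exact absurd hPe hx
      · obtain ⟨A, e', B, rfl, h1, h2⟩ := ih ⟨e, he, hPe⟩
        refine ⟨x :: A, e', B, by simp, h1, ?_⟩
        intro f hf
        rcases List.mem_cons.1 hf with rfl | hf
        · exact hx
        · exact h2 f hf

/-- split a list at the last element satisfying `P`. -/
theorem list_last_pred {α : Type*} {p : List α} {P : α → Prop}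
    (h : ∃ e ∈ p, P e) : ∃ A e B, p = A ++ e :: B ∧ P e ∧ ∀ f ∈ B, ¬ P f := by
  classical
  induction p with
  | nil => simp at h
  | cons x p ih =>
    by_cases hp : ∃ e ∈ p, P e
    · obtain ⟨A, e', B, rfl, h1, h2⟩ := ih hp
      exact ⟨x :: A, e', B, by simp, h1, h2⟩
    · obtain ⟨e, he, hPe⟩ := h
      rcases List.mem_cons.1 he with rfl | he
      · refine ⟨[], e, p, by simp, hPe, fun f hf hPf => hp ⟨f, hf, hPf⟩⟩
      · exact absurd ⟨e, he, hPe⟩ hp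

theorem isWalk_deloop {a b : V} {p : List (V × V)} (h : IsWalk E a b p) :
    ∃ q, IsWalk E a b q ∧ (∀ e ∈ q, e ∈ p) ∧ ∀ e ∈ q, e.1 ≠ e.2 := by
  classical
  induction h with
  | nil => exact ⟨[], .nil _, by simp, by simp⟩
  | cons h hp ih =>
    rename_i u v w p'
    obtain ⟨q, h1, h2, h3⟩ := ih
    by_cases huv : u = v
    · subst huv
      exact ⟨q, h1, fun e he => List.mem_cons_of_mem _ (h2 e he), h3⟩
    · refine ⟨(u, v) :: q, .cons h h1, ?_, ?_⟩
      · intro e he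
        rcases List.mem_cons.1 he with rfl | he
        · simp
        · exact List.mem_cons_of_mem _ (h2 e he)
      · intro e he
        rcases List.mem_cons.1 he with rfl | he
        · exact huv
        · exact h3 e he

theorem isWalk_tail_mem {a b : V} {p : List (V × V)} (h : IsWalk E a b p)
    {e : V × V} (he : e ∈ p) : e.1 = a ∨ ∃ g ∈ p, g.2 = e.1 := by
  induction h with
  | nil => simp at he
  | cons h hp ih =>
    rename_i u v w p'
    rcases List.mem_cons.1 he with rfl | he
    · exact Or.inl rfl
    · rcases ih he with h1 | ⟨g, hg, h2⟩
      · exact Or.inr ⟨(u, v), by simp, h1.symm ▸ rfl⟩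
      · exact Or.inr ⟨g, List.mem_cons_of_mem _ hg, h2⟩

/-- A minimal-length walk exists whenever some walk exists. -/
theorem exists_min_walk {a b : V} (h : Reaches E a b) :
    ∃ p, IsWalk E a b p ∧ ∀ q, IsWalk E a b q → p.length ≤ q.length := by
  classical
  obtain ⟨p0, hp0⟩ := h
  have hS : ∃ n, ∃ p : List (V × V), p.length = n ∧ IsWalk E a b p :=
    ⟨p0.length, p0, rfl, hp0⟩
  obtain ⟨p, hlen, hp⟩ := Nat.find_spec hS
  refine ⟨p, hp, fun q hq => ?_⟩
  rw [hlen]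
  exact Nat.find_min' hS ⟨q, rfl, hq⟩

end WalkLib
section DomLib

variable {V : Type*} {E : Set (V × V)} {s : V}

theorem dom_source (w : V) : Dom E s s w := fun _ _ => Or.inl rfl

theorem dom_self (v : V) : Dom E s v v := by
  intro p hp
  cases hp with
  | nil => exact Or.inl rfl
  | cons h hp => exact Or.inr (isWalk_last_head (.cons h hp) (by simp))

theorem dom_to_source {y : V} (h : Dom E s y s) : y = s := by
  rcases h [] (.nil s) with h1 | h1
  · exact h1
  · simp at h1

theorem not_onWalk {a x : V} {p : List (V × V)} (h : ¬ OnWalk a p x) :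
    x ≠ a ∧ ∀ e ∈ p, e.2 ≠ x := by
  constructor
  · intro hxa; exact h (Or.inl hxa)
  · intro e he hx; exact h (Or.inr ⟨e, he, hx⟩)

theorem dom_trans {x y z : V} (h1 : Dom E s x y) (h2 : Dom E s y z) :
    Dom E s x z := by
  intro p hp
  rcases h2 p hp with h | h
  · subst h
    exact Or.inl (dom_to_source h1)
  · obtain ⟨A, e, B, rfl, he2, -⟩ := list_first_pred (P := fun (e : V × V) => e.2 = y) h
    obtain ⟨hA, heE, hB⟩ := isWalk_split hp
    have hAy : IsWalk E s y (A ++ [e]) :=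
      isWalk_append hA (he2 ▸ IsWalk.cons (show (e.1, e.2) ∈ E from heE) (.nil _))
    rcases h1 (A ++ [e]) hAy with h | ⟨f, hf, hf2⟩
    · exact Or.inl h
    · refine Or.inr ⟨f, ?_, hf2⟩
      rcases List.mem_append.1 hf with hf | hf
      · exact List.mem_append_left _ hf
      · simp at hf
        subst hf
        exact List.mem_append_right _ (List.mem_cons_self)

theorem not_dom_elim {x w : V} (h : ¬ Dom E s x w) :
    ∃ p, IsWalk E s w p ∧ x ≠ s ∧ ∀ e ∈ p, e.2 ≠ x := by
  simp only [Dom, not_forall] at h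
  obtain ⟨p, hp, hx⟩ := h
  obtain ⟨h1, h2⟩ := not_onWalk hx
  exact ⟨p, hp, h1, h2⟩

theorem dom_antisymm (hSC : StronglyConnected E) {x y : V}
    (h1 : Dom E s x y) (h2 : Dom E s y x) : x = y := by
  classical
  by_contra hne
  obtain ⟨q, hq, hmin⟩ := exists_min_walk (hSC s y)
  rcases h1 q hq with h | hx
  · rw [h] at h2
    exact hne (h.trans (dom_to_source h2).symm)
  · have hxs : x ≠ s := by
      rintro rfl
      exact hne (dom_to_source h2 : y = x).symm
    obtain ⟨A, e, B, rfl, he2, hA⟩ := list_first_pred (P := fun (e : V × V) => e.2 = x) hx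
    obtain ⟨hwA, heE, hwB⟩ := isWalk_split hq
    have hwAx : IsWalk E s x (A ++ [e]) :=
      isWalk_append hwA (he2 ▸ IsWalk.cons (show (e.1, e.2) ∈ E from heE) (.nil _))
    rcases h2 _ hwAx with h | ⟨f, hf, hf2⟩
    · rw [h] at h1
      exact hne ((dom_to_source h1).trans h.symm)
    · have hfA : f ∈ A := by
        rcases List.mem_append.1 hf with hf | hf
        · exact hf
        · simp at hf
          subst hf
          exact absurd (hf2.symm.trans he2).symm hne
      obtain ⟨A1, g, B1, rfl, hg2, -⟩ :=
        list_first_pred (P := fun e => e.2 = y) ⟨f, hfA, hf2⟩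
      obtain ⟨hwA1, hgE, -⟩ := isWalk_split hwA
      have : IsWalk E s y (A1 ++ [g]) :=
        isWalk_append hwA1 (hg2 ▸ IsWalk.cons (show (g.1, g.2) ∈ E from hgE) (.nil _))
      have hlt := hmin _ this
      simp at hlt

theorem dom_total (hSC : StronglyConnected E) {a b v : V}
    (ha : Dom E s a v) (hb : Dom E s b v) : Dom E s a b ∨ Dom E s b a := by
  classical
  by_contra hcon
  push_neg at hcon
  obtain ⟨hab, hba⟩ := hcon
  obtain ⟨t, ht, has, htA⟩ := not_dom_elim hab
  obtain ⟨m, hm, hbs, hmA⟩ := not_dom_elim hba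
  -- t : walk s → b avoiding a ; m : walk s → a avoiding b
  obtain ⟨q, hq⟩ := hSC s v
  -- split q at the last occurrence of b
  have hbq : ∃ e ∈ q, e.2 = b := by
    rcases hb q hq with h | h
    · exact absurd h hbs
    · exact h
  obtain ⟨A, e, B, rfl, he2, hB⟩ := list_last_pred (P := fun (e : V × V) => e.2 = b) hbq
  obtain ⟨-, -, hwB⟩ := isWalk_split hq
  rw [he2] at hwB
  -- t ++ B : walk s → v ; a on it, a not on t, so a is a head in B
  have htB : IsWalk E s v (t ++ B) := isWalk_append ht hwB
  have haB : ∃ e ∈ B, e.2 = a := by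
    rcases ha _ htB with h | ⟨f, hf, hf2⟩
    · exact absurd h has
    · rcases List.mem_append.1 hf with hf | hf
      · exact absurd hf2 (htA f hf)
      · exact ⟨f, hf, hf2⟩
  obtain ⟨A1, g, B1, rfl, hg2, -⟩ := list_first_pred (P := fun (e : V × V) => e.2 = a) haB
  obtain ⟨-, -, hwB1⟩ := isWalk_split hwB
  rw [hg2] at hwB1
  -- m ++ B1 : walk s → v avoiding b
  have : IsWalk E s v (m ++ B1) := isWalk_append hm hwB1
  rcases hb _ this with h | ⟨f, hf, hf2⟩
  · exact hbs h
  · rcases List.mem_append.1 hf with hf | hf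
    · exact hmA f hf hf2
    · exact hB f (List.mem_append_right _ (List.mem_cons_of_mem _ hf)) hf2

end DomLib
section ChainLib

variable {V : Type*} {E : Set (V × V)} {s : V}

theorem chain_bot_finset {V : Type*} {R : V → V → Prop} (F : Finset V) :
    F.Nonempty → (∀ a ∈ F, ∀ b ∈ F, R a b ∨ R b a) →
    (∀ a ∈ F, ∀ b ∈ F, ∀ c ∈ F, R a b → R b c → R a c) →
    ∃ m ∈ F, ∀ y ∈ F, R y m := by
  induction F using Finset.cons_induction with
  | empty => intro hne; exact absurd hne (by simp)
  | @cons a F' ha ih =>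
    intro hne htot htrans
    rcases F'.eq_empty_or_nonempty with rfl | hne'
    · refine ⟨a, by simp, ?_⟩
      have haa : R a a := by
        rcases htot a (Finset.mem_cons_self _ _) a (Finset.mem_cons_self _ _) with h | h <;>
          exact h
      intro y hy
      have hya : y = a := by simpa using hy
      rw [hya]
      exact haa
    · obtain ⟨m, hm, hbot⟩ := ih hne'
        (fun x hx y hy => htot x (Finset.mem_cons_of_mem hx) y (Finset.mem_cons_of_mem hy))
        (fun x hx y hy z hz => htrans x (Finset.mem_cons_of_mem hx) y
          (Finset.mem_cons_of_mem hy) z (Finset.mem_cons_of_mem hz))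
      rcases htot a (Finset.mem_cons_self _ _) m (Finset.mem_cons_of_mem hm) with h | h
      · refine ⟨m, Finset.mem_cons_of_mem hm, ?_⟩
        intro y hy
        rcases Finset.mem_cons.1 hy with rfl | hy
        · exact h
        · exact hbot y hy
      · refine ⟨a, Finset.mem_cons_self _ _, ?_⟩
        intro y hy
        rcases Finset.mem_cons.1 hy with rfl | hy
        · rcases htot y (Finset.mem_cons_self _ _) y (Finset.mem_cons_self _ _) with h' | h' <;>
            exact h'
        · exact htrans y (Finset.mem_cons_of_mem hy) m (Finset.mem_cons_of_mem hm) a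
            (Finset.mem_cons_self _ _) (hbot y hy) h

theorem chain_bot {V : Type*} {R : V → V → Prop} {S : Set V} (hfin : S.Finite) (hne : S.Nonempty)
    (htot : ∀ a ∈ S, ∀ b ∈ S, R a b ∨ R b a)
    (htrans : ∀ a ∈ S, ∀ b ∈ S, ∀ c ∈ S, R a b → R b c → R a c) :
    ∃ m ∈ S, ∀ y ∈ S, R y m := by
  classical
  obtain ⟨m, hm, hbot⟩ := chain_bot_finset hfin.toFinset
    (by rwa [Set.Finite.toFinset_nonempty])
    (fun a ha b hb => htot a (hfin.mem_toFinset.1 ha) b (hfin.mem_toFinset.1 hb))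
    (fun a ha b hb c hc => htrans a (hfin.mem_toFinset.1 ha) b (hfin.mem_toFinset.1 hb) c
      (hfin.mem_toFinset.1 hc))
  exact ⟨m, hfin.mem_toFinset.1 hm, fun y hy => hbot y (hfin.mem_toFinset.2 hy)⟩

theorem dom_set_finite (hSC : StronglyConnected E) (v : V) :
    {x : V | Dom E s x v}.Finite := by
  classical
  obtain ⟨q, hq⟩ := hSC s v
  have hsub : {x : V | Dom E s x v} ⊆ insert s {x : V | x ∈ q.map Prod.snd} := by
    intro x hx
    rcases hx q hq with h | ⟨e, he, h2⟩
    · exact h ▸ Set.mem_insert _ _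
    · refine Set.mem_insert_of_mem _ ?_
      simp only [Set.mem_setOf_eq, List.mem_map]
      exact ⟨e, he, h2⟩
  exact Set.Finite.subset (((q.map Prod.snd).finite_toSet).insert s) hsub

theorem idom_exists (hSC : StronglyConnected E) {v : V} (hv : v ≠ s) :
    ∃ d, Idom E s d v := by
  classical
  have hfin : {y : V | Dom E s y v ∧ y ≠ v}.Finite :=
    (dom_set_finite hSC v).subset (fun y hy => hy.1)
  have hne : {y : V | Dom E s y v ∧ y ≠ v}.Nonempty := ⟨s, dom_source v, Ne.symm hv⟩
  obtain ⟨m, hm, hbot⟩ := chain_bot (R := fun a b => Dom E s a b) hfin hne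
    (fun a ha b hb => dom_total hSC ha.1 hb.1)
    (fun a _ b _ c _ h1 h2 => dom_trans h1 h2)
  exact ⟨m, ⟨hm.1, hm.2⟩, fun x hx => hbot x ⟨hx.1, hx.2⟩⟩

theorem idom_unique (hSC : StronglyConnected E) {d d' v : V}
    (h1 : Idom E s d v) (h2 : Idom E s d' v) : d = d' :=
  dom_antisymm hSC (h2.2 d h1.1) (h1.2 d' h2.1)

theorem pdom_source_false {y : V} (h : PDom E s y s) : False :=
  h.2 (dom_to_source h.1)

end ChainLib

section BridgeLib

variable {V : Type*} {E : Set (V × V)} {s : V}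

theorem bridge_head_ne_source {e : V × V} (h : IsBridge E s e) : e.2 ≠ s := by
  intro hes
  have hw : IsWalk E s e.2 [] := by rw [hes]; exact .nil s
  have := h.2 [] hw
  simp at this

theorem marked_bridge {x : V} (h : Marked E s x) (hx : x ≠ s) :
    ∃ e, IsBridge E s e ∧ e.2 = x := by
  rcases h with h | h
  · exact absurd h hx
  · exact h

theorem bridge_tail_not_dom (hSC : StronglyConnected E) {e : V × V}
    (h : IsBridge E s e) : ¬ Dom E s e.2 e.1 := by
  classical
  intro hdom
  obtain ⟨q, hq, hmin⟩ := exists_min_walk (hSC s e.2)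
  have heq : e ∈ q := h.2 q hq
  obtain ⟨A, B, rfl⟩ := List.append_of_mem heq
  obtain ⟨hwA, heE, hwB⟩ := isWalk_split hq
  have hA : ∀ f ∈ A, f.2 ≠ e.2 := by
    intro f hf hfe
    obtain ⟨A1, g, B1, rfl, hg2, -⟩ := list_first_pred (P := fun f => f.2 = e.2) ⟨f, hf, hfe⟩
    obtain ⟨hwA1, hgE, -⟩ := isWalk_split hwA
    have hw : IsWalk E s e.2 (A1 ++ [g]) :=
      isWalk_append hwA1 (hg2 ▸ IsWalk.cons (show (g.1, g.2) ∈ E from hgE) (.nil _))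
    have := hmin _ hw
    simp at this
  rcases hdom A hwA with h' | ⟨f, hf, hf2⟩
  · exact bridge_head_ne_source h h'
  · exact hA f hf hf2

theorem entering_edge {e : V × V} (h : IsBridge E s e)
    {z t : V} (hz : ¬ Dom E s e.2 z) (ht : Dom E s e.2 t) (hE : (z, t) ∈ E) :
    t = e.2 ∧ z = e.1 := by
  obtain ⟨m, hm, hxs, hmA⟩ := not_dom_elim hz
  have hw : IsWalk E s t (m ++ [(z, t)]) := isWalk_append hm (.cons hE (.nil _))
  have hte : t = e.2 := by
    rcases ht _ hw with h' | ⟨f, hf, hf2⟩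
    · exact absurd h' hxs
    · rcases List.mem_append.1 hf with hf | hf
      · exact absurd hf2 (hmA f hf)
      · simp at hf
        subst hf
        exact hf2
  subst hte
  have hze : e = (z, e.2) := by
    have hmem := h.2 _ hw
    rcases List.mem_append.1 hmem with hf | hf
    · exact absurd rfl (hmA e hf)
    · simpa using hf
  exact ⟨rfl, by rw [hze]⟩

theorem bridge_in_prefix {e : V × V} (h : IsBridge E s e) {a t : V}
    (ha : ¬ Dom E s e.2 a) {A : List (V × V)} (hA : IsWalk E a t A)
    (ht : Dom E s e.2 t) : e ∈ A := by
  obtain ⟨m, hm, hxs, hmA⟩ := not_dom_elim ha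
  have hw : IsWalk E s t (m ++ A) := isWalk_append hm hA
  have hhead : ∃ f ∈ A, f.2 = e.2 := by
    rcases ht _ hw with h' | ⟨f, hf, hf2⟩
    · exact absurd h' hxs
    · rcases List.mem_append.1 hf with hf | hf
      · exact absurd hf2 (hmA f hf)
      · exact ⟨f, hf, hf2⟩
  obtain ⟨A1, g, B1, rfl, hg2, -⟩ := list_first_pred (P := fun (f : V × V) => f.2 = e.2) hhead
  obtain ⟨hwA1, hgE, -⟩ := isWalk_split hA
  have hw2 : IsWalk E s e.2 ((m ++ A1) ++ [g]) :=
    isWalk_append (isWalk_append hm hwA1)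
      (hg2 ▸ IsWalk.cons (show (g.1, g.2) ∈ E from hgE) (.nil _))
  have hbm := h.2 _ hw2
  rcases List.mem_append.1 hbm with hf | hf
  · rcases List.mem_append.1 hf with hf | hf
    · exact absurd rfl (hmA e hf)
    · exact List.mem_append_left _ hf
  · simp at hf
    subst hf
    exact List.mem_append_right _ (List.mem_cons_self)

theorem bridge_in_suffix {e : V × V} {r : V} (h : IsBridge E s e) (her : e.2 = r)
    {t w : V} (ht : ¬ Dom E s r t) {B : List (V × V)} (hB : IsWalk E t w B)
    (hw : Dom E s r w) : e ∈ B := by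
  subst her
  exact bridge_in_prefix h ht hB hw

end BridgeLib
section ContractLib

variable {V : Type*} {E : Set (V × V)} {s r : V}

/-- `x` is a marked vertex whose immediate dominator lies in `T(r)`:
the "credentials" of an auxiliary vertex of the second kind. -/
def Cred (E : Set (V × V)) (s r x : V) : Prop :=
  Marked E s x ∧ ∃ d, InTree E s r d ∧ Idom E s d x

theorem intree_self (hr : Marked E s r) : InTree E s r r :=
  ⟨hr, dom_self r, fun _ _ h => h⟩

theorem cred_not_intree (hSC : StronglyConnected E) {x : V}
    (hc : Cred E s r x) : ¬ InTree E s r x := by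
  intro hIT
  obtain ⟨hm, d, hd, hx⟩ := hc
  have hxr : x = r := dom_antisymm hSC (hIT.2.2 x hm (dom_self x)) hIT.2.1
  subst hxr
  have hdx : d = x := dom_antisymm hSC hx.1.1 hd.2.1
  subst hdx
  exact hx.1.2 rfl

theorem cred_basic (hSC : StronglyConnected E) {x : V} (hc : Cred E s r x) :
    Dom E s r x ∧ x ≠ r ∧ x ≠ s := by
  obtain ⟨hm, d, hd, hx⟩ := hc
  have hrx : Dom E s r x := dom_trans hd.2.1 hx.1.1
  refine ⟨hrx, ?_, ?_⟩
  · rintro rfl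
    have hdx : d = x := dom_antisymm hSC hx.1.1 hd.2.1
    subst hdx
    exact hx.1.2 rfl
  · rintro rfl
    exact pdom_source_false hx.1

theorem cred_not_dom_tree (hSC : StronglyConnected E) {x u : V}
    (hc : Cred E s r x) (hu : InTree E s r u) : ¬ Dom E s x u := by
  intro hdom
  obtain ⟨hrx, hxr, -⟩ := cred_basic hSC hc
  exact hxr (dom_antisymm hSC (hu.2.2 x hc.1 hdom) hrx)

theorem idom_r_not_intree (hSC : StronglyConnected E) {o : V}
    (ho : Idom E s o r) : ¬ InTree E s r o := by
  intro hIT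
  have : o = r := dom_antisymm hSC ho.1.1 hIT.2.1
  exact ho.1.2 this

theorem idom_r_not_cred (hSC : StronglyConnected E) {o : V}
    (ho : Idom E s o r) : ¬ Cred E s r o := by
  intro hc
  exact ho.1.2 (dom_antisymm hSC ho.1.1 (cred_basic hSC hc).1)

/-- Central uniqueness: any contraction target of a vertex dominated by a
credentialed vertex `x` is `x` itself. -/
theorem contractsTo_eq_of_dom (hSC : StronglyConnected E) {x v α : V}
    (hc : Cred E s r x) (hxv : Dom E s x v) (hct : ContractsTo E s r v α) : α = x := by
  obtain ⟨hm, d, hd, hx⟩ := hc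
  have hrx : Dom E s r x := (cred_basic hSC ⟨hm, d, hd, hx⟩).1
  have hxr : x ≠ r := (cred_basic hSC ⟨hm, d, hd, hx⟩).2.1
  rcases hct with ⟨hIT, rfl⟩ | ⟨hrv, hnIT, hmα, hαv, d', hd', hα⟩ | ⟨hnrv, hα⟩
  · exact absurd hxv (cred_not_dom_tree hSC ⟨hm, d, hd, hx⟩ hIT)
  · have hcα : Cred E s r α := ⟨hmα, d', hd', hα⟩
    rcases dom_total hSC hxv hαv with h | h
    · by_cases hxα : x = α
      · exact hxα.symm
      · have h1 : Dom E s x d' := hα.2 x ⟨h, hxα⟩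
        have h2 : Dom E s x r := hd'.2.2 x hm h1
        exact absurd (dom_antisymm hSC h2 hrx) hxr
    · by_cases hαx : α = x
      · exact hαx
      · have h1 : Dom E s α d := hx.2 α ⟨h, hαx⟩
        have h2 : Dom E s α r := hd.2.2 α hmα h1
        exact absurd (dom_antisymm hSC h2 (cred_basic hSC hcα).1)
            (cred_basic hSC hcα).2.1
  · exact absurd (dom_trans hrx hxv) hnrv

theorem contractsTo_of_tree (hSC : StronglyConnected E) {v α : V}
    (hv : InTree E s r v) (hct : ContractsTo E s r v α) : α = v := by
  rcases hct with ⟨-, rfl⟩ | ⟨-, hnIT, -⟩ | ⟨hnrv, -⟩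
  · rfl
  · exact absurd hv hnIT
  · exact absurd hv.2.1 hnrv

theorem contractsTo_tree_eq (hSC : StronglyConnected E) {v α : V}
    (hα : InTree E s r α) (hct : ContractsTo E s r v α) : v = α := by
  rcases hct with ⟨hIT, rfl⟩ | ⟨-, -, hmα, -, d', hd', hα'⟩ | ⟨-, hα'⟩
  · rfl
  · exact absurd hα (cred_not_intree hSC ⟨hmα, d', hd', hα'⟩)
  · exact absurd hα (idom_r_not_intree hSC hα')

theorem contractsTo_o_elim (hSC : StronglyConnected E) {v α o : V}
    (ho : Idom E s o r) (hct : ContractsTo E s r v α) (hαo : α = o) :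
    ¬ Dom E s r v := by
  subst hαo
  rcases hct with ⟨hIT, rfl⟩ | ⟨-, -, hmα, -, d', hd', hα'⟩ | ⟨hnrv, -⟩
  · exact absurd hIT (idom_r_not_intree hSC ho)
  · exact absurd ⟨hmα, d', hd', hα'⟩ (idom_r_not_cred hSC ho)
  · exact hnrv

theorem contractsTo_forced_o (hSC : StronglyConnected E) {v α o : V}
    (ho : Idom E s o r) (hnrv : ¬ Dom E s r v) (hct : ContractsTo E s r v α) :
    α = o := by
  rcases hct with ⟨hIT, rfl⟩ | ⟨hrv, -⟩ | ⟨-, hα'⟩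
  · exact absurd hIT.2.1 hnrv
  · exact absurd hrv hnrv
  · exact idom_unique hSC hα' ho

theorem contractsTo_fn (hSC : StronglyConnected E) {v α α' : V}
    (h1 : ContractsTo E s r v α) (h2 : ContractsTo E s r v α') : α = α' := by
  rcases h1 with ⟨hIT, rfl⟩ | ⟨hrv, hnIT, hmα, hαv, d', hd', hα⟩ | ⟨hnrv, hα⟩
  · exact (contractsTo_of_tree hSC hIT h2).symm
  · exact (contractsTo_eq_of_dom hSC ⟨hmα, d', hd', hα⟩ hαv h2).symm
  · exact (contractsTo_forced_o hSC hα hnrv h2).symm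

theorem contractsTo_total (hSC : StronglyConnected E) (hr : Marked E s r) (v : V) :
    ∃ α, ContractsTo E s r v α := by
  classical
  by_cases hIT : InTree E s r v
  · exact ⟨v, Or.inl ⟨hIT, rfl⟩⟩
  by_cases hrv : Dom E s r v
  · -- nonempty set of marked dominators of `v` strictly below `r`
    have hne : ∃ y, Marked E s y ∧ Dom E s y v ∧ Dom E s r y ∧ y ≠ r := by
      have : ¬ ∀ x, Marked E s x → Dom E s x v → Dom E s x r := fun h => hIT ⟨hr, hrv, h⟩
      push_neg at this
      obtain ⟨y, hym, hyv, hyr⟩ := this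
      have hry : Dom E s r y := by
        rcases dom_total hSC hyv hrv with h | h
        · exact absurd h hyr
        · exact h
      refine ⟨y, hym, hyv, hry, ?_⟩
      intro hyr2
      rw [hyr2] at hyr
      exact hyr (dom_self r)
    have hfin : {y | Marked E s y ∧ Dom E s y v ∧ Dom E s r y ∧ y ≠ r}.Finite :=
      (dom_set_finite hSC v).subset (fun y hy => hy.2.1)
    obtain ⟨m, hm, htop⟩ := chain_bot (R := fun a b => Dom E s b a) hfin
      (by obtain ⟨y, h⟩ := hne; exact ⟨y, h⟩)
      (fun a ha b hb => (dom_total hSC hb.2.1 ha.2.1))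
      (fun a _ b _ c _ h1 h2 => dom_trans h2 h1)
    -- m is the topmost marked dominator of v strictly below r
    have hms : m ≠ s := by
      rintro rfl
      exact hm.2.2.2 (dom_to_source hm.2.2.1).symm
    obtain ⟨d, hd⟩ := idom_exists hSC hms
    have hdIT : InTree E s r d := by
      refine ⟨hr, hd.2 r ⟨hm.2.2.1, fun h => hm.2.2.2 h.symm⟩, ?_⟩
      intro y hym hyd
      have hym2 : Dom E s y m := dom_trans hyd hd.1.1
      have hyv : Dom E s y v := dom_trans hym2 hm.2.1
      rcases dom_total hSC hyv hrv with h | h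
      · exact h
      · by_cases hyr : y = r
        · rw [hyr]
          exact dom_self r
        · have hmy : Dom E s m y := htop y ⟨hym, hyv, h, hyr⟩
          have : m = d := dom_antisymm hSC (dom_trans hmy hyd) hd.1.1
          exact absurd this.symm hd.1.2
    exact ⟨m, Or.inr (Or.inl ⟨hrv, hIT, hm.1, hm.2.1, d, hdIT, hd⟩)⟩
  · have hrs : r ≠ s := by
      rintro rfl
      exact hrv (dom_source v)
    obtain ⟨o, ho⟩ := idom_exists hSC hrs
    exact ⟨o, Or.inr (Or.inr ⟨hrv, ho⟩)⟩

end ContractLib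
section AuxLib

variable {V : Type*} {E : Set (V × V)} {s r : V}

theorem contractsTo_dom_of_cred (hSC : StronglyConnected E) {x v : V}
    (hc : Cred E s r x) (hct : ContractsTo E s r v x) : Dom E s x v := by
  rcases hct with ⟨hIT, rfl⟩ | ⟨-, -, -, hxv, -⟩ | ⟨-, hα'⟩
  · exact absurd hIT (cred_not_intree hSC hc)
  · exact hxv
  · exact absurd hc (idom_r_not_cred hSC hα')

theorem walk_prefix_fst {u w : V} {p : List (V × V)} (hp : IsWalk E u w p)
    {e : V × V} (he : e ∈ p) : ∃ A, IsWalk E u e.1 A ∧ ∀ f ∈ A, f ∈ p := by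
  obtain ⟨A, B, rfl⟩ := List.append_of_mem he
  obtain ⟨h1, -, -⟩ := isWalk_split hp
  exact ⟨A, h1, fun f hf => List.mem_append_left _ hf⟩

theorem walk_prefix_snd {u w : V} {p : List (V × V)} (hp : IsWalk E u w p)
    {e : V × V} (he : e ∈ p) : ∃ A, IsWalk E u e.2 A ∧ ∀ f ∈ A, f ∈ p := by
  obtain ⟨A, B, rfl⟩ := List.append_of_mem he
  obtain ⟨h1, h2, -⟩ := isWalk_split hp
  refine ⟨A ++ [e], isWalk_append h1 (IsWalk.cons (show (e.1, e.2) ∈ E from h2) (.nil _)), ?_⟩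
  intro f hf
  rcases List.mem_append.1 hf with hf | hf
  · exact List.mem_append_left _ hf
  · simp at hf
    subst hf
    exact List.mem_append_right _ (List.mem_cons_self)

theorem walk_suffix_fst {u w : V} {p : List (V × V)} (hp : IsWalk E u w p)
    {e : V × V} (he : e ∈ p) : ∃ B, IsWalk E e.1 w B ∧ ∀ f ∈ B, f ∈ p := by
  obtain ⟨A, B, rfl⟩ := List.append_of_mem he
  obtain ⟨-, h2, h3⟩ := isWalk_split hp
  refine ⟨e :: B, IsWalk.cons (show (e.1, e.2) ∈ E from h2) h3, ?_⟩
  intro f hf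
  exact List.mem_append_right _ hf

theorem walk_suffix_snd {u w : V} {p : List (V × V)} (hp : IsWalk E u w p)
    {e : V × V} (he : e ∈ p) : ∃ B, IsWalk E e.2 w B ∧ ∀ f ∈ B, f ∈ p := by
  obtain ⟨A, B, rfl⟩ := List.append_of_mem he
  obtain ⟨-, -, h3⟩ := isWalk_split hp
  exact ⟨B, h3, fun f hf => List.mem_append_right _ (List.mem_cons_of_mem _ hf)⟩

theorem isWalk_map_aux {h : V → V} (hh : ∀ v, ContractsTo E s r v (h v))
    {a b : V} {p : List (V × V)} (hp : IsWalk E a b p) :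
    IsWalk (AuxE E s r) (h a) (h b) (p.map fun e => (h e.1, h e.2)) := by
  induction hp with
  | nil => exact .nil _
  | cons hE hp ih =>
    rename_i u' v' w' p'
    exact .cons (show ((h u', h v')) ∈ AuxE E s r from ⟨u', v', hE, hh u', hh v'⟩) ih

/-- The two collision scenarios force a common bridge edge on two edge-disjoint
walks; hence images of edge-disjoint walks under contraction remain disjoint. -/
theorem twoEDP_to_aux (hSC : StronglyConnected E) (hr : Marked E s r) {u w : V}
    (hu : InTree E s r u) (hw : InTree E s r w) (h2 : TwoEDP E u w) :
    TwoEDP (AuxE E s r) u w := by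
  classical
  obtain ⟨p, q, hp, hq, hdisj⟩ := h2
  choose h hh using contractsTo_total hSC hr
  have hhu : h u = u := contractsTo_of_tree hSC hu (hh u)
  have hhw : h w = w := contractsTo_of_tree hSC hw (hh w)
  refine ⟨p.map fun e => (h e.1, h e.2), q.map fun e => (h e.1, h e.2),
    hhu ▸ hhw ▸ isWalk_map_aux hh hp, hhu ▸ hhw ▸ isWalk_map_aux hh hq, ?_⟩
  intro f hfp hfq
  obtain ⟨e, hep, hFe⟩ := List.mem_map.1 hfp
  obtain ⟨e', heq, hFe'⟩ := List.mem_map.1 hfq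
  by_cases hee : e = e'
  · exact hdisj hep (hee ▸ heq)
  have hcoll : h e.1 = h e'.1 ∧ h e.2 = h e'.2 := by
    have := hFe.trans hFe'.symm
    exact ⟨congrArg Prod.fst this, congrArg Prod.snd this⟩
  -- at least one endpoint pair differs
  have hkey : (e.1 ≠ e'.1 ∧ h e.1 = h e'.1) ∨ (e.2 ≠ e'.2 ∧ h e.2 = h e'.2) := by
    by_cases h1 : e.1 = e'.1
    · refine Or.inr ⟨?_, hcoll.2⟩
      intro h2'
      exact hee (Prod.ext h1 h2')
    · exact Or.inl ⟨h1, hcoll.1⟩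
  -- a helper for the credentialed-region case
  have region_case : ∀ (x a a' : V), Cred E s r x → Dom E s x a → Dom E s x a' →
      (∃ A, IsWalk E u a A ∧ ∀ f ∈ A, f ∈ p) →
      (∃ A, IsWalk E u a' A ∧ ∀ f ∈ A, f ∈ q) → False := by
    intro x a a' hc hxa hxa' ⟨A, hA, hAp⟩ ⟨A', hA', hAq⟩
    obtain ⟨eb, hbr, heb2⟩ := marked_bridge hc.1 (cred_basic hSC hc).2.2
    have hnd : ¬ Dom E s eb.2 u := heb2 ▸ cred_not_dom_tree hSC hc hu
    have h1 : eb ∈ A := bridge_in_prefix hbr hnd hA (heb2 ▸ hxa)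
    have h2' : eb ∈ A' := bridge_in_prefix hbr hnd hA' (heb2 ▸ hxa')
    exact hdisj (hAp eb h1) (hAq eb h2')
  -- a helper for the outside case
  have outside_case : ∀ (a a' : V), ¬ Dom E s r a → ¬ Dom E s r a' →
      (∃ B, IsWalk E a w B ∧ ∀ f ∈ B, f ∈ p) →
      (∃ B, IsWalk E a' w B ∧ ∀ f ∈ B, f ∈ q) → False := by
    intro a a' hna hna' ⟨B, hB, hBp⟩ ⟨B', hB', hBq⟩
    have hrs : r ≠ s := by
      rintro rfl
      exact hna (dom_source a)
    obtain ⟨eb, hbr, heb2⟩ := marked_bridge hr hrs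
    have h1 : eb ∈ B := bridge_in_suffix hbr heb2 hna hB hw.2.1
    have h2' : eb ∈ B' := bridge_in_suffix hbr heb2 hna' hB' hw.2.1
    exact hdisj (hBp eb h1) (hBq eb h2')
  rcases hkey with ⟨hne, hα⟩ | ⟨hne, hα⟩
  · -- collision at the tails
    rcases hh e.1 with ⟨hIT, he1⟩ | ⟨hrv, hnIT, hmα, hαv, d', hd', hα'⟩ | ⟨hnrv, hα'⟩
    · -- tree vertex : forces equality
      have : e'.1 = h e.1 := contractsTo_tree_eq hSC (he1 ▸ hIT) (hα ▸ hh e'.1)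
      exact hne (he1 ▸ this).symm
    · have hc : Cred E s r (h e.1) := ⟨hmα, d', hd', hα'⟩
      exact region_case (h e.1) e.1 e'.1 hc hαv
        (contractsTo_dom_of_cred hSC hc (hα ▸ hh e'.1))
        (walk_prefix_fst hp hep) (walk_prefix_fst hq heq)
    · have hna' : ¬ Dom E s r e'.1 := contractsTo_o_elim hSC hα' (hh e'.1) hα.symm
      exact outside_case e.1 e'.1 hnrv hna' (walk_suffix_fst hp hep) (walk_suffix_fst hq heq)
  · -- collision at the heads
    rcases hh e.2 with ⟨hIT, he1⟩ | ⟨hrv, hnIT, hmα, hαv, d', hd', hα'⟩ | ⟨hnrv, hα'⟩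
    · have : e'.2 = h e.2 := contractsTo_tree_eq hSC (he1 ▸ hIT) (hα ▸ hh e'.2)
      exact hne (he1 ▸ this).symm
    · have hc : Cred E s r (h e.2) := ⟨hmα, d', hd', hα'⟩
      exact region_case (h e.2) e.2 e'.2 hc hαv
        (contractsTo_dom_of_cred hSC hc (hα ▸ hh e'.2))
        (walk_prefix_snd hp hep) (walk_prefix_snd hq heq)
    · have hna' : ¬ Dom E s r e'.2 := contractsTo_o_elim hSC hα' (hh e'.2) hα.symm
      exact outside_case e.2 e'.2 hnrv hna' (walk_suffix_snd hp hep) (walk_suffix_snd hq heq)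

end AuxLib
section RegionLib

variable {V : Type*} {E : Set (V × V)} {s r : V}

/-- A walk from outside the region of `x` into it contains an entering edge. -/
theorem entering_exists {x t a : V} {B : List (V × V)} (hB : IsWalk E t a B)
    (hnt : ¬ Dom E s x t) (ha : Dom E s x a) :
    ∃ e ∈ B, ¬ Dom E s x e.1 ∧ Dom E s x e.2 := by
  classical
  induction hB with
  | nil => exact absurd ha hnt
  | cons hE hp ih =>
    rename_i u' v' w' p'
    by_cases hv : Dom E s x v'
    · exact ⟨(u', v'), List.mem_cons_self, hnt, hv⟩
    · obtain ⟨e, he, h1, h2⟩ := ih hv ha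
      exact ⟨e, List.mem_cons_of_mem _ he, h1, h2⟩

/-- Within the region, along a walk with no head equal to `x`, all vertices are
dominated by `x`. -/
theorem inside_walk_all {x a : V} {eb : V × V} (hbr : IsBridge E s eb)
    (heb : eb.2 = x) (ha : Dom E s x a) :
    ∀ {v : V} {B : List (V × V)}, IsWalk E v a B → Dom E s x v →
      (∀ f ∈ B, f.2 ≠ x) → ∀ e ∈ B, Dom E s x e.1 ∧ Dom E s x e.2 := by
  classical
  intro v B
  induction B generalizing v with
  | nil => intro _ _ _; simp
  | cons f B ih =>
    obtain ⟨f1, f2⟩ := f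
    intro hB hv hnx
    cases hB with
    | cons hE hp =>
      have hxt : Dom E s x f2 := by
        by_contra hnt
        obtain ⟨e, he, h1, h2⟩ := entering_exists hp hnt ha
        obtain ⟨h3, -⟩ := entering_edge hbr (heb ▸ h1) (heb ▸ h2) (isWalk_edge_mem hp he)
        exact hnx e (List.mem_cons_of_mem _ he) (h3.trans heb)
      intro e he
      rcases List.mem_cons.1 he with rfl | he
      · exact ⟨hv, hxt⟩
      · exact ih hp hxt (fun f' hf => hnx f' (List.mem_cons_of_mem _ hf)) e he

/-- Every vertex of the region of `x` can be reached from `x` by a walk inside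
the region. -/
theorem region_walk (hSC : StronglyConnected E) {x a : V} {eb : V × V}
    (hbr : IsBridge E s eb) (heb : eb.2 = x) (hxs : x ≠ s) (ha : Dom E s x a) :
    ∃ m, IsWalk E x a m ∧ ∀ e ∈ m, Dom E s x e.1 ∧ Dom E s x e.2 := by
  classical
  obtain ⟨q, hq⟩ := hSC s a
  have hx : ∃ f ∈ q, f.2 = x := by
    rcases ha q hq with h | h
    · exact absurd h hxs
    · exact h
  obtain ⟨A, g, B, rfl, hg2, hB⟩ := list_last_pred (P := fun (f : V × V) => f.2 = x) hx
  obtain ⟨-, -, h3⟩ := isWalk_split hq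
  rw [hg2] at h3
  exact ⟨B, h3, inside_walk_all hbr heb ha h3 (dom_self x) hB⟩

/-- Every vertex outside the region of `r` can reach the tail of the bridge of
`r` by a walk staying outside. -/
theorem outside_walk (hSC : StronglyConnected E) {t : V} {eb : V × V}
    (hbr : IsBridge E s eb) (heb : eb.2 = r) (hnt : ¬ Dom E s r t) :
    ∃ m, IsWalk E t eb.1 m ∧ ∀ e ∈ m, ¬ Dom E s r e.1 ∧ ¬ Dom E s r e.2 := by
  classical
  obtain ⟨W, hW⟩ := hSC t eb.1
  have hnc : ¬ Dom E s r eb.1 := heb ▸ bridge_tail_not_dom hSC hbr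
  by_cases hin : ∃ f ∈ W, Dom E s r f.2
  · obtain ⟨A, g, B, rfl, hg2, hA⟩ := list_first_pred (P := fun (f : V × V) => Dom E s r f.2) hin
    obtain ⟨h1, h2, -⟩ := isWalk_split hW
    have hg1 : ¬ Dom E s r g.1 := by
      rcases eq_or_ne A [] with rfl | hAne
      · cases h1; exact hnt
      · obtain ⟨f, hf, hf2⟩ := isWalk_last_head h1 hAne
        exact hf2 ▸ hA f hf
    obtain ⟨-, hg1e⟩ := entering_edge hbr (heb ▸ hg1) (heb ▸ hg2) h2
    rw [hg1e] at h1
    refine ⟨A, h1, ?_⟩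
    intro e he
    refine ⟨?_, hA e he⟩
    rcases eq_or_ne A [] with rfl | hAne
    · simp at he
    · rcases isWalk_tail_mem h1 he with h' | ⟨f, hf, hf2⟩
      · exact h' ▸ hnt
      · exact hf2 ▸ hA f hf
  · push_neg at hin
    refine ⟨W, hW, ?_⟩
    intro e he
    refine ⟨?_, hin e he⟩
    rcases isWalk_tail_mem hW he with h' | ⟨f, hf, hf2⟩
    · exact h' ▸ hnt
    · exact hf2 ▸ hin f hf

/-- The unique non-loop auxiliary edge entering a credentialed vertex `x`. -/
theorem aux_in_unique (hSC : StronglyConnected E) {x : V} (hc : Cred E s r x)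
    {eb : V × V} (hbr : IsBridge E s eb) (heb : eb.2 = x) {γ : V} (hne : γ ≠ x)
    (hmem : (γ, x) ∈ AuxE E s r) : ContractsTo E s r eb.1 γ := by
  obtain ⟨a, b, hE, hCa, hCb⟩ := hmem
  have hxb : Dom E s x b := contractsTo_dom_of_cred hSC hc hCb
  have hna : ¬ Dom E s x a := by
    intro hd
    exact hne (contractsTo_eq_of_dom hSC hc hd hCa)
  obtain ⟨-, h2⟩ := entering_edge hbr (heb ▸ hna) (heb ▸ hxb) hE
  exact h2 ▸ hCa

/-- The unique non-loop auxiliary edge leaving the outside vertex `o` goes to `r`. -/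
theorem aux_out_o (hSC : StronglyConnected E) (hr : Marked E s r) {o : V}
    (ho : Idom E s o r) {δ : V} (hmem : (o, δ) ∈ AuxE E s r) (hne : δ ≠ o) :
    δ = r := by
  obtain ⟨a, b, hE, hCa, hCb⟩ := hmem
  have hna : ¬ Dom E s r a := contractsTo_o_elim hSC ho hCa rfl
  have hrb : Dom E s r b := by
    by_contra hnb
    exact hne (contractsTo_forced_o hSC ho hnb hCb)
  have hrs : r ≠ s := by
    rintro rfl
    exact hna (dom_source a)
  obtain ⟨eb, hbr, heb2⟩ := marked_bridge hr hrs
  obtain ⟨h1, -⟩ := entering_edge hbr (heb2 ▸ hna) (heb2 ▸ hrb) hE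
  rw [h1.trans heb2] at hCb
  exact contractsTo_of_tree hSC (intree_self hr) hCb

/-- If a walk of `G_r` from a tree vertex touches a credentialed vertex `x`, it
contains the unique entering edge of `x`. -/
theorem visit_x (hSC : StronglyConnected E) {x u w : V} (hc : Cred E s r x)
    {eb : V × V} (hbr : IsBridge E s eb) (heb : eb.2 = x)
    {P : List (V × V)} (hP : IsWalk (AuxE E s r) u w P) (hu : InTree E s r u)
    {g : V × V} (hg : g ∈ P) (hgx : g.1 = x ∨ g.2 = x) :
    ∃ γ, (γ, x) ∈ P ∧ ContractsTo E s r eb.1 γ := by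
  classical
  have hux : u ≠ x := by
    rintro rfl
    exact cred_not_intree hSC hc hu
  have hhead : ∃ f ∈ P, f.2 = x := by
    rcases hgx with h1 | h1
    · obtain ⟨A, hA, hsub⟩ := walk_prefix_fst hP hg
      rw [h1] at hA
      rcases eq_or_ne A [] with rfl | hAne
      · cases hA; exact absurd rfl hux
      · obtain ⟨f, hf, hf2⟩ := isWalk_last_head hA hAne
        exact ⟨f, hsub f hf, hf2⟩
    · exact ⟨g, hg, h1⟩
  obtain ⟨A, g', B, rfl, hg2, hA⟩ := list_first_pred (P := fun (f : V × V) => f.2 = x) hhead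
  obtain ⟨h1, h2, -⟩ := isWalk_split hP
  have hg1 : g'.1 ≠ x := by
    intro hg1
    rw [hg1] at h1
    rcases eq_or_ne A [] with rfl | hAne
    · cases h1; exact absurd rfl hux
    · obtain ⟨f, hf, hf2⟩ := isWalk_last_head h1 hAne
      exact hA f hf hf2
  have : (g'.1, x) ∈ AuxE E s r := by
    have : (g'.1, g'.2) ∈ AuxE E s r := h2
    rwa [hg2] at this
  refine ⟨g'.1, ?_, aux_in_unique hSC hc hbr heb hg1 this⟩
  have : (g'.1, x) = g' := by
    rw [← hg2]
  exact this ▸ List.mem_append_right _ (List.mem_cons_self)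

/-- If a loop-free walk of `G_r` ending at a tree vertex touches `o`, it
contains the edge `(o, r)`. -/
theorem visit_o (hSC : StronglyConnected E) (hr : Marked E s r) {o u w : V}
    (ho : Idom E s o r) {P : List (V × V)} (hP : IsWalk (AuxE E s r) u w P)
    (hloop : ∀ e ∈ P, e.1 ≠ e.2) (hw : InTree E s r w)
    {g : V × V} (hg : g ∈ P) (hgo : g.1 = o ∨ g.2 = o) : (o, r) ∈ P := by
  classical
  have hwo : w ≠ o := by
    rintro rfl
    exact idom_r_not_intree hSC ho hw
  rcases hgo with h1 | h1
  · have hmem : (o, g.2) ∈ AuxE E s r := by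
      have : (g.1, g.2) ∈ AuxE E s r := isWalk_edge_mem hP hg
      rwa [h1] at this
    have hne : g.2 ≠ o := by
      rw [← h1]
      exact fun hh => hloop g hg hh.symm
    have : g.2 = r := aux_out_o hSC hr ho hmem hne
    have hgor : (o, r) = g := by rw [← h1, ← this]
    exact hgor ▸ hg
  · obtain ⟨B, hB, hsub⟩ := walk_suffix_snd hP hg
    rw [h1] at hB
    rcases B with _ | ⟨⟨z1, z2⟩, B₁⟩
    · cases hB
      exact absurd rfl hwo
    · cases hB with
      | cons hE hB' =>
        have hmemP : (o, z2) ∈ P := hsub _ (List.mem_cons_self)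
        have hne : z2 ≠ o := Ne.symm (hloop _ hmemP)
        have hvr : z2 = r := aux_out_o hSC hr ho hE hne
        rw [hvr] at hmemP
        exact hmemP

end RegionLib
section LiftLib

variable {V : Type*} {E : Set (V × V)} {s r : V}

theorem lift_walk (hSC : StronglyConnected E) (hr : Marked E s r) {w : V}
    (hw : InTree E s r w) :
    ∀ (P : List (V × V)) {β t : V}, IsWalk (AuxE E s r) β w P →
    (∀ e ∈ P, e.1 ≠ e.2) → ContractsTo E s r t β → (Dom E s r t → t = β) →
    ∃ q, IsWalk E t w q ∧ ∀ e ∈ q,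
      (∃ α γ, ContractsTo E s r e.1 α ∧ ContractsTo E s r e.2 γ ∧ α ≠ γ ∧ (α, γ) ∈ P) ∨
      (∃ α, ContractsTo E s r e.1 α ∧ ContractsTo E s r e.2 α ∧ ¬ InTree E s r α ∧
        (α = β ∨ ∃ g ∈ P, g.2 = α ∨ g.1 = α)) := by
  intro P
  induction P with
  | nil =>
    intro β t hP hloop hct harr
    cases hP
    have htw : t = w := contractsTo_tree_eq hSC hw hct
    subst htw
    exact ⟨[], .nil t, by simp⟩
  | cons g P2 ih =>
    intro β t hP hloop hct harr
    obtain ⟨g1, g2⟩ := g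
    cases hP with
    | cons hgE hP2 =>
      obtain ⟨a, b, hE, hCa, hCb⟩ := hgE
      have hβδ : β ≠ g2 := hloop (β, g2) (List.mem_cons_self)
      -- the connector from `t` to `a` inside the class of `β`
      have hconn : ∃ m, IsWalk E t a m ∧ ∀ e ∈ m,
          ContractsTo E s r e.1 β ∧ ContractsTo E s r e.2 β ∧ ¬ InTree E s r β := by
        rcases hct with ⟨hITt, hβt⟩ | ⟨hrt, hnITt, hmβ, hβt, d', hd', hβ'⟩ | ⟨hnrt, hβ'⟩
        · have hat : a = t := by
            have := contractsTo_tree_eq hSC (hβt ▸ hITt) hCa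
            rw [this, hβt]
          refine ⟨[], ?_, by simp⟩
          rw [hat]
          exact .nil t
        · have hcβ : Cred E s r β := ⟨hmβ, d', hd', hβ'⟩
          obtain ⟨hrβ, hβr, hβs⟩ := cred_basic hSC hcβ
          obtain ⟨eb, hbr, heb2⟩ := marked_bridge hmβ hβs
          have hβa : Dom E s β a := contractsTo_dom_of_cred hSC hcβ hCa
          obtain ⟨m, hm, hmdom⟩ := region_walk hSC hbr heb2 hβs hβa
          have ht : t = β := harr hrt
          refine ⟨m, by rw [ht]; exact hm, ?_⟩
          intro e he
          obtain ⟨h1, h2⟩ := hmdom e he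
          have hmk : ∀ v', Dom E s β v' → ContractsTo E s r v' β := by
            intro v' hv'
            refine Or.inr (Or.inl ⟨dom_trans hrβ hv', ?_, hmβ, hv', d', hd', hβ'⟩)
            intro hIT
            exact cred_not_dom_tree hSC hcβ hIT hv'
          exact ⟨hmk _ h1, hmk _ h2, cred_not_intree hSC hcβ⟩
        · have hna : ¬ Dom E s r a := contractsTo_o_elim hSC hβ' hCa rfl
          have hrb : Dom E s r b := by
            by_contra hnb
            exact hβδ (contractsTo_forced_o hSC hβ' hnb hCb).symm
          have hrs : r ≠ s := by
            rintro rfl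
            exact hnrt (dom_source t)
          obtain ⟨eb, hbr, heb2⟩ := marked_bridge hr hrs
          obtain ⟨-, hav⟩ := entering_edge hbr (heb2 ▸ hna) (heb2 ▸ hrb) hE
          obtain ⟨m, hm, hmdom⟩ := outside_walk hSC hbr heb2 hnrt
          refine ⟨m, by rw [hav]; exact hm, ?_⟩
          intro e he
          obtain ⟨h1, h2⟩ := hmdom e he
          exact ⟨Or.inr (Or.inr ⟨h1, hβ'⟩), Or.inr (Or.inr ⟨h2, hβ'⟩),
            idom_r_not_intree hSC hβ'⟩
      obtain ⟨m, hm, hmclass⟩ := hconn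
      -- the arrival condition at `g2`
      have harr' : Dom E s r b → b = g2 := by
        intro hdom
        rcases hCb with ⟨hITb, hgb⟩ | ⟨hrb2, hnITb, hmδ, hδb, d'', hd'', hδ'⟩ | ⟨hnrb, -⟩
        · exact hgb.symm
        · have hcδ : Cred E s r g2 := ⟨hmδ, d'', hd'', hδ'⟩
          obtain ⟨-, -, hδs⟩ := cred_basic hSC hcδ
          obtain ⟨eb', hbr', heb2'⟩ := marked_bridge hmδ hδs
          have hnδa : ¬ Dom E s g2 a := by
            intro hd
            exact hβδ (contractsTo_eq_of_dom hSC hcδ hd hCa)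
          exact ((entering_edge hbr' (heb2' ▸ hnδa) (heb2' ▸ hδb) hE).1).trans heb2'
        · exact absurd hdom hnrb
      obtain ⟨q2, hq2, hcls2⟩ := ih hP2 (fun e he => hloop e (List.mem_cons_of_mem _ he))
        hCb harr'
      refine ⟨m ++ (a, b) :: q2, isWalk_append hm (.cons hE hq2), ?_⟩
      intro e he
      rcases List.mem_append.1 he with he | he
      · obtain ⟨h1, h2, h3⟩ := hmclass e he
        exact Or.inr ⟨β, h1, h2, h3, Or.inl rfl⟩
      · rcases List.mem_cons.1 he with rfl | he
        · exact Or.inl ⟨β, g2, hCa, hCb, hβδ, List.mem_cons_self⟩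
        · rcases hcls2 e he with ⟨α, γ, h1, h2, h3, h4⟩ | ⟨α, h1, h2, h3, h5⟩
          · exact Or.inl ⟨α, γ, h1, h2, h3, List.mem_cons_of_mem _ h4⟩
          · refine Or.inr ⟨α, h1, h2, h3, Or.inr ?_⟩
            rcases h5 with h5 | ⟨g', hg', h6⟩
            · exact ⟨(β, g2), List.mem_cons_self, Or.inl h5.symm⟩
            · exact ⟨g', List.mem_cons_of_mem _ hg', h6⟩

theorem twoEDP_from_aux (hSC : StronglyConnected E) (hr : Marked E s r) {u w : V}
    (hu : InTree E s r u) (hw : InTree E s r w)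
    (h2 : TwoEDP (AuxE E s r) u w) : TwoEDP E u w := by
  classical
  obtain ⟨P, Q, hP, hQ, hdisj⟩ := h2
  obtain ⟨P', hP', hPsub, hPloop⟩ := isWalk_deloop hP
  obtain ⟨Q', hQ', hQsub, hQloop⟩ := isWalk_deloop hQ
  have hCu : ContractsTo E s r u u := Or.inl ⟨hu, rfl⟩
  obtain ⟨qP, hqP, hclsP⟩ := lift_walk hSC hr hw P' hP' hPloop hCu (fun _ => rfl)
  obtain ⟨qQ, hqQ, hclsQ⟩ := lift_walk hSC hr hw Q' hQ' hQloop hCu (fun _ => rfl)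
  refine ⟨qP, qQ, hqP, hqQ, ?_⟩
  intro e heP heQ
  rcases hclsP e heP with ⟨α, γ, hCα, hCγ, hne, hmem⟩ | ⟨α, hCα, hCγ, hnIT, hopts⟩
  · rcases hclsQ e heQ with ⟨α', γ', hCα', hCγ', hne', hmem'⟩ | ⟨α', hCα', hCγ', hnIT', hopts'⟩
    · have e1 : α = α' := contractsTo_fn hSC hCα hCα'
      have e2 : γ = γ' := contractsTo_fn hSC hCγ hCγ'
      rw [← e1, ← e2] at hmem'
      exact hdisj (hPsub _ hmem) (hQsub _ hmem')
    · have e1 : α = α' := contractsTo_fn hSC hCα hCα'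
      have e2 : γ = α' := contractsTo_fn hSC hCγ hCγ'
      exact hne (e1.trans e2.symm)
  · rcases hclsQ e heQ with ⟨α', γ', hCα', hCγ', hne', hmem'⟩ | ⟨α', hCα', hCγ', hnIT', hopts'⟩
    · have e1 : α' = α := contractsTo_fn hSC hCα' hCα
      have e2 : γ' = α := contractsTo_fn hSC hCγ' hCγ
      exact hne' (e1.trans e2.symm)
    · have e1 : α' = α := contractsTo_fn hSC hCα' hCα
      have hgP : ∃ g ∈ P', g.1 = α ∨ g.2 = α := by
        rcases hopts with h | ⟨g, hg, h6⟩
        · rw [h] at hnIT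
          exact absurd hu hnIT
        · exact ⟨g, hg, Or.symm h6⟩
      have hgQ : ∃ g ∈ Q', g.1 = α ∨ g.2 = α := by
        rcases hopts' with h | ⟨g, hg, h6⟩
        · have hαu : α = u := e1.symm.trans h
          rw [hαu] at hnIT
          exact absurd hu hnIT
        · rw [e1] at h6
          exact ⟨g, hg, Or.symm h6⟩
      obtain ⟨gP, hgPmem, hgPx⟩ := hgP
      obtain ⟨gQ, hgQmem, hgQx⟩ := hgQ
      rcases hCα with ⟨hIT, hα⟩ | ⟨-, -, hmα, hαe, d', hd', hα'⟩ | ⟨hnr, hα'⟩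
      · rw [hα] at hnIT
        exact absurd hIT hnIT
      · have hcα : Cred E s r α := ⟨hmα, d', hd', hα'⟩
        obtain ⟨eb, hbr, heb2⟩ := marked_bridge hmα (cred_basic hSC hcα).2.2
        obtain ⟨γ1, hmem1, hC1⟩ := visit_x hSC hcα hbr heb2 hP' hu hgPmem hgPx
        obtain ⟨γ2, hmem2, hC2⟩ := visit_x hSC hcα hbr heb2 hQ' hu hgQmem hgQx
        have hγ : γ1 = γ2 := contractsTo_fn hSC hC1 hC2
        rw [← hγ] at hmem2
        exact hdisj (hPsub _ hmem1) (hQsub _ hmem2)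
      · have h1 := visit_o hSC hr hα' hP' hPloop hw hgPmem hgPx
        have h2' := visit_o hSC hr hα' hQ' hQloop hw hgQmem hgQx
        exact hdisj (hPsub _ h1) (hQsub _ h2')

theorem dom_transfer (hSC : StronglyConnected E) {u w x : V}
    (hTwo : TwoEDP E w u) (hm : Marked E s x) (hd : Dom E s x u) : Dom E s x w := by
  by_contra hnw
  have hxs : x ≠ s := by
    rintro rfl
    exact hnw (dom_source w)
  obtain ⟨eb, hbr, heb2⟩ := marked_bridge hm hxs
  obtain ⟨p, q, hp, hq, hdisj⟩ := hTwo
  exact hdisj (bridge_in_prefix hbr (heb2.symm ▸ hnw) hp (heb2.symm ▸ hd))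
    (bridge_in_prefix hbr (heb2.symm ▸ hnw) hq (heb2.symm ▸ hd))

end LiftLib
theorem stmt15 (E : Set (V × V)) (s : V) (hSC : StronglyConnected E)
    (r : V) (hr : Marked E s r) :
    (∀ u w : V, InTree E s r u → InTree E s r w →
      (TwoEC (AuxE E s r) u w ↔ TwoEC E u w)) ∧
    ∀ B : Set V, Is2ECBlock E B →
      ∀ u ∈ B, ∀ w ∈ B, ∀ r' : V, InTree E s r' u → InTree E s r' w := by
  constructor
  · intro u w hu hw
    constructor
    · rintro ⟨h1, h2⟩
      exact ⟨twoEDP_from_aux hSC hr hu hw h1, twoEDP_from_aux hSC hr hw hu h2⟩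
    · rintro ⟨h1, h2⟩
      exact ⟨twoEDP_to_aux hSC hr hu hw h1, twoEDP_to_aux hSC hr hw hu h2⟩
  · intro B hB u huB w hwB r' hu'
    have h2 : TwoEC E u w := hB.1 u huB w hwB
    refine ⟨hu'.1, dom_transfer hSC h2.2 hu'.1 hu'.2.1, ?_⟩
    intro x hm hd
    exact hu'.2.2 x hm (dom_transfer hSC h2.1 hm hd)
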